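/- Let (e_i) be an orthonormal basis of an n-dimensional real inner product space (V,g), h a bilinear form on V, and k,r ≥ 0 with k+r ≤ n. Then for any indices i₁ < i₂ < … < i_{k+r}, the exterior product g^k h^r satisfies g^k h^r(e_{i₁}∧…∧e_{i_{k+r}}, e_{i₁}∧…∧e_{i_{k+r}}) = k!·r!·s_r(M), where M is the (k+r)×(k+r) matrix with entries h(e_{i_a}, e_{i_b}) (1 ≤ a,b ≤ k+r) and s_r(M) denotes the r-th characteristic coefficient of M, i.e. the sum of its principal r×r minors. -/

import Mathlib

noncomputable section

open Finset

/-- Double forms over an `n`-dimensional real inner product space, described by their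
coefficients in a fixed orthonormal basis: a `(p,q)`-double form corresponds to a function
supported on pairs of subsets of cardinalities `p` and `q`. -/
abbrev DForm (n : ℕ) := Finset (Fin n) → Finset (Fin n) → ℝ

namespace DForm

variable {n : ℕ}

/-- Sign of the shuffle placing the elements of `A` (in increasing order) before
those of `B` (in increasing order). -/
def shuffleSign (A B : Finset (Fin n)) : ℝ :=
  (-1 : ℝ) ^ (∑ x ∈ B, (A.filter fun a => x < a).card)

/-- The exterior product of double forms. -/
def wedge (ω₁ ω₂ : DForm n) : DForm n := fun I J =>
  ∑ A ∈ I.powerset, ∑ B ∈ J.powerset,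
    shuffleSign A (I \ A) * shuffleSign B (J \ B) * ω₁ A B * ω₂ (I \ A) (J \ B)

/-- Exterior powers `ω^k` of a double form. -/
def dpow (ω : DForm n) : ℕ → DForm n
  | 0 => fun I J => if I = ∅ ∧ J = ∅ then 1 else 0
  | k + 1 => wedge ω (dpow ω k)

/-- The double Hodge star operator. -/
def hstar (ω : DForm n) : DForm n := fun I J =>
  shuffleSign Iᶜ I * shuffleSign Jᶜ J * ω Iᶜ Jᶜ

/-- The contraction `c` of double forms. -/
def contr (ω : DForm n) : DForm n := fun I J =>
  ∑ j : Fin n,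
    if j ∈ I ∨ j ∈ J then 0
    else shuffleSign {j} I * shuffleSign {j} J * ω (insert j I) (insert j J)

/-- Iterated contraction `c^k`. -/
def citer (ω : DForm n) : ℕ → DForm n
  | 0 => ω
  | k + 1 => contr (citer ω k)

/-- The inner product of double forms. -/
def dinner (ω₁ ω₂ : DForm n) : ℝ :=
  ∑ I : Finset (Fin n), ∑ J : Finset (Fin n), ω₁ I J * ω₂ I J

/-- The transpose `ω^t` of a double form. -/
def transp (ω : DForm n) : DForm n := fun I J => ω J I

/-- The composition (Greub) product `ω₁ ∘ ω₂` of double forms. -/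
def comp (ω₁ ω₂ : DForm n) : DForm n := fun I J =>
  ∑ K : Finset (Fin n), ω₂ I K * ω₁ K J

/-- The scalar value of a `(0,0)`-double form. -/
def toScalar (ω : DForm n) : ℝ := ω ∅ ∅

/-- The metric, as a `(1,1)`-double form. -/
def gMetric (n : ℕ) : DForm n := fun I J => if I = J ∧ I.card = 1 then 1 else 0

/-- Iterated composition power `ω^{∘r}` of a `(1,1)`-double form, with `ω^{∘0} = g`. -/
def cpow (ω : DForm n) : ℕ → DForm n
  | 0 => gMetric n
  | r + 1 => comp ω (cpow ω r)

/-- The `(1,1)`-double form associated to a bilinear form, given by its matrix in the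
orthonormal basis. -/
def ofMatrix (h : Matrix (Fin n) (Fin n) ℝ) : DForm n := fun I J =>
  ∑ i : Fin n, ∑ j : Fin n, if I = {i} ∧ J = {j} then h i j else 0

/-- `ω` is a `(p,q)`-double form. -/
def IsOfDeg (ω : DForm n) (p q : ℕ) : Prop :=
  ∀ I J : Finset (Fin n), ω I J ≠ 0 → I.card = p ∧ J.card = q

/-- `ω` is a symmetric double form. -/
def IsSym (ω : DForm n) : Prop := ∀ I J, ω I J = ω J I

/-- The sign relating `e_{v 0} ∧ ⋯ ∧ e_{v (p-1)}` to the corresponding increasing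
basis `p`-vector (and `0` if the indices are not pairwise distinct). -/
def tupleSign {p : ℕ} (v : Fin p → Fin n) : ℝ :=
  if Function.Injective v then (((Equiv.Perm.sign (Tuple.sort v)) : ℤ) : ℝ) else 0

/-- Evaluation of a double form on wedges of basis vectors indexed by arbitrary tuples. -/
def evalT (ω : DForm n) {p q : ℕ} (v : Fin p → Fin n) (w : Fin q → Fin n) : ℝ :=
  tupleSign v * tupleSign w * ω (Finset.image v Finset.univ) (Finset.image w Finset.univ)

/-- The first Bianchi identity for a `(2,2)`-double form:
`R(x∧y,z∧t) + R(y∧z,x∧t) + R(z∧x,y∧t) = 0`. -/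
def Bianchi2 (R : DForm n) : Prop :=
  ∀ x y z t : Fin n,
    evalT R ![x, y] ![z, t] + evalT R ![y, z] ![x, t] + evalT R ![z, x] ![y, t] = 0

/-- The first Bianchi identity for a `(p,p)`-double form. -/
def FirstBianchi (ω : DForm n) (p : ℕ) : Prop :=
  ∀ (x : Fin (p + 1) → Fin n) (y : Fin (p - 1) → Fin n),
    ∑ j : Fin (p + 1),
      (-1 : ℝ) ^ (j : ℕ) * evalT ω (x ∘ Fin.succAbove j) (Fin.cons (x j) y) = 0

/-- The characteristic coefficient `s_k(h)` of a bilinear form `h`, defined through the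
characteristic polynomial: `det(h - λ g) = ∑ (-1)^(n-i) s_i(h) λ^(n-i)`. -/
def sInv (h : Matrix (Fin n) (Fin n) ℝ) (k : ℕ) : ℝ :=
  (-1 : ℝ) ^ k * (Matrix.charpoly h).coeff (n - k)

/-- The `k`-th cofactor (Newton) transformation `t_k(h) = (1/(k!(n-1-k)!)) *(g^{n-1-k} h^k)`. -/
def tInv (h : Matrix (Fin n) (Fin n) ℝ) (k : ℕ) : DForm n :=
  ((k.factorial * (n - 1 - k).factorial : ℕ) : ℝ)⁻¹ •
    hstar (wedge (dpow (gMetric n) (n - 1 - k)) (dpow (ofMatrix h) k))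

/-- The `(r,q)`-cofactor `s_{(r,q)}(h) = (1/(q!(n-q-r)!)) *(g^{n-q-r} h^q)`. -/
def sCof (h : Matrix (Fin n) (Fin n) ℝ) (r q : ℕ) : DForm n :=
  ((q.factorial * (n - q - r).factorial : ℕ) : ℝ)⁻¹ •
    hstar (wedge (dpow (gMetric n) (n - q - r)) (dpow (ofMatrix h) q))


lemma shuffleSign_mul_self (A B : Finset (Fin n)) : shuffleSign A B * shuffleSign A B = 1 := by
  rw [shuffleSign, ← pow_add, ← two_mul, pow_mul]
  norm_num

lemma shuffleSign_singleton (a : Fin n) (B : Finset (Fin n)) :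
    shuffleSign {a} B = (-1 : ℝ) ^ (B.filter fun x => x < a).card := by
  rw [shuffleSign]
  congr 1
  rw [Finset.card_filter]
  refine Finset.sum_congr rfl fun x hx => ?_
  rw [Finset.filter_singleton]
  by_cases hxa : x < a <;> simp [hxa]

lemma gMetric_singleton (i j : Fin n) : gMetric n {i} {j} = if i = j then 1 else 0 := by
  simp [gMetric, Finset.singleton_inj]

lemma gMetric_not_singleton {A B : Finset (Fin n)} (hA : ∀ i, A ≠ {i}) : gMetric n A B = 0 := by
  rw [gMetric, if_neg]
  rintro ⟨rfl, hc⟩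
  obtain ⟨i, hi⟩ := Finset.card_eq_one.1 hc
  exact hA i hi

lemma gMetric_not_singleton' {A B : Finset (Fin n)} (hB : ∀ i, B ≠ {i}) : gMetric n A B = 0 := by
  rw [gMetric, if_neg]
  rintro ⟨rfl, hc⟩
  obtain ⟨i, hi⟩ := Finset.card_eq_one.1 hc
  exact hB i hi

lemma ofMatrix_singleton (h : Matrix (Fin n) (Fin n) ℝ) (i j : Fin n) :
    ofMatrix h {i} {j} = h i j := by
  rw [ofMatrix]
  rw [Finset.sum_eq_single i]
  · rw [Finset.sum_eq_single j]
    · simp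
    · intro b _ hb; rw [if_neg]; rintro ⟨-, hbj⟩; exact hb (Finset.singleton_inj.1 hbj).symm
    · simp
  · intro a _ ha
    apply Finset.sum_eq_zero
    intro b _
    rw [if_neg]; rintro ⟨hai, -⟩; exact ha (Finset.singleton_inj.1 hai).symm
  · simp

lemma ofMatrix_not_singleton {h : Matrix (Fin n) (Fin n) ℝ} {A B : Finset (Fin n)}
    (hA : ∀ i, A ≠ {i}) : ofMatrix h A B = 0 := by
  rw [ofMatrix]
  apply Finset.sum_eq_zero; intro i _
  apply Finset.sum_eq_zero; intro j _
  rw [if_neg]; rintro ⟨hi, -⟩; exact hA i hi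

lemma ofMatrix_not_singleton' {h : Matrix (Fin n) (Fin n) ℝ} {A B : Finset (Fin n)}
    (hB : ∀ j, B ≠ {j}) : ofMatrix h A B = 0 := by
  rw [ofMatrix]
  apply Finset.sum_eq_zero; intro i _
  apply Finset.sum_eq_zero; intro j _
  rw [if_neg]; rintro ⟨-, hj⟩; exact hB j hj

lemma sum_powerset_singleton (I : Finset (Fin n)) (f : Finset (Fin n) → ℝ)
    (hf : ∀ A ∈ I.powerset, (∀ j, A ≠ {j}) → f A = 0) :
    ∑ A ∈ I.powerset, f A = ∑ j ∈ I, f {j} := by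
  classical
  have himg : ∑ j ∈ I, f {j}
      = ∑ A ∈ I.image (fun j : Fin n => ({j} : Finset (Fin n))), f A :=
    (Finset.sum_image (by intro x _ y _ hxy; exact Finset.singleton_inj.1 hxy)).symm
  rw [himg]
  symm
  apply Finset.sum_subset
  · intro A hA
    simp only [Finset.mem_image] at hA
    obtain ⟨j, hj, rfl⟩ := hA
    simpa using hj
  · intro A hA hA'
    refine hf A hA fun j hj => ?_
    subst hj
    exact hA' (Finset.mem_image_of_mem _ (by simpa using hA))

lemma wedge_gMetric (ω : DForm n) (I J : Finset (Fin n)) :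
    wedge (gMetric n) ω I J = ∑ i ∈ I,
      (if i ∈ J then shuffleSign {i} (I \ {i}) * shuffleSign {i} (J \ {i}) * ω (I \ {i}) (J \ {i}) else 0) := by
  rw [wedge]
  rw [sum_powerset_singleton I _ (fun A hA hAs => Finset.sum_eq_zero fun B _ => by
    rw [gMetric_not_singleton hAs]; ring)]
  refine Finset.sum_congr rfl fun i hi => ?_
  rw [sum_powerset_singleton J _ (fun B hB hBs => by
    rw [gMetric_not_singleton' hBs]; ring)]
  rw [← Finset.sum_ite_eq J i (fun j => shuffleSign {i} (I \ {i}) * shuffleSign {j} (J \ {j}) * ω (I \ {i}) (J \ {j}))]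
  refine Finset.sum_congr rfl fun j hj => ?_
  rw [gMetric_singleton]
  by_cases hij : i = j <;> simp [hij]

lemma wedge_ofMatrix (h : Matrix (Fin n) (Fin n) ℝ) (ω : DForm n) (I J : Finset (Fin n)) :
    wedge (ofMatrix h) ω I J = ∑ i ∈ I, ∑ j ∈ J,
      shuffleSign {i} (I \ {i}) * shuffleSign {j} (J \ {j}) * h i j * ω (I \ {i}) (J \ {j}) := by
  rw [wedge]
  rw [sum_powerset_singleton I _ (fun A hA hAs => Finset.sum_eq_zero fun B _ => by
    rw [ofMatrix_not_singleton hAs]; ring)]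
  refine Finset.sum_congr rfl fun i hi => ?_
  rw [sum_powerset_singleton J _ (fun B hB hBs => by
    rw [ofMatrix_not_singleton' hBs]; ring)]
  refine Finset.sum_congr rfl fun j hj => ?_
  rw [ofMatrix_singleton]

lemma dpow_gMetric (k : ℕ) (I J : Finset (Fin n)) :
    dpow (gMetric n) k I J = if I = J ∧ I.card = k then (k.factorial : ℝ) else 0 := by
  induction k generalizing I J with
  | zero =>
    rw [dpow]
    by_cases h1 : I = ∅ ∧ J = ∅
    · obtain ⟨rfl, rfl⟩ := h1; simp
    · show (if I = ∅ ∧ J = ∅ then (1:ℝ) else 0) = _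
      rw [if_neg h1, if_neg]
      rintro ⟨rfl, h2⟩
      rw [Finset.card_eq_zero] at h2
      exact h1 ⟨h2, h2⟩
  | succ k ih =>
    rw [dpow, wedge_gMetric]
    by_cases hIJ : I = J ∧ I.card = k + 1
    · obtain ⟨rfl, hcard⟩ := hIJ
      rw [if_pos ⟨rfl, hcard⟩]
      have : ∀ i ∈ I, (if i ∈ I then shuffleSign {i} (I \ {i}) * shuffleSign {i} (I \ {i}) *
          dpow (gMetric n) k (I \ {i}) (I \ {i}) else 0) = (k.factorial : ℝ) := by
        intro i hi
        rw [if_pos hi, shuffleSign_mul_self, one_mul, ih, if_pos]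
        refine ⟨rfl, ?_⟩
        rw [← Finset.erase_eq, Finset.card_erase_of_mem hi, hcard]
        omega
      rw [Finset.sum_congr rfl this, Finset.sum_const, hcard, nsmul_eq_mul]
      rw [Nat.factorial_succ]
      push_cast
      ring
    · rw [if_neg hIJ]
      apply Finset.sum_eq_zero
      intro i hi
      by_cases hiJ : i ∈ J
      · rw [if_pos hiJ, ih]
        rw [if_neg, mul_zero]
        rintro ⟨hd, hc⟩
        apply hIJ
        simp only [← Finset.erase_eq] at hd hc
        constructor
        · rw [← Finset.insert_erase hi, ← Finset.insert_erase hiJ, hd]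
        · rw [Finset.card_erase_of_mem hi] at hc
          have := Finset.card_pos.2 ⟨i, hi⟩
          omega
      · rw [if_neg hiJ]

variable {α : Type*} [LinearOrder α]

/-- Determinant of the submatrix of `h` indexed by `A × B` (read in increasing order). -/
noncomputable def mdet (h : α → α → ℝ) (A B : Finset α) : ℝ :=
  if hc : B.card = A.card then
    Matrix.det (Matrix.of fun i j : Fin A.card =>
      h (A.orderEmbOfFin rfl i) (B.orderEmbOfFin hc j))
  else 0

lemma mdet_eq {A B : Finset α} {m : ℕ} (hA : A.card = m) (hB : B.card = m) (h : α → α → ℝ) :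
    mdet h A B = Matrix.det (Matrix.of fun i j : Fin m =>
      h (A.orderEmbOfFin hA i) (B.orderEmbOfFin hB j)) := by
  subst hA
  rw [mdet, dif_pos hB]

lemma mdet_empty (h : α → α → ℝ) : mdet h (∅ : Finset α) ∅ = 1 := by
  rw [mdet_eq (m := 0) Finset.card_empty Finset.card_empty]
  exact Matrix.det_fin_zero

/-- Membership surjectivity of `orderEmbOfFin`. -/
lemma exists_orderEmbOfFin_eq {A : Finset α} {m : ℕ} (hA : A.card = m) {a : α} (ha : a ∈ A) :
    ∃ i : Fin m, A.orderEmbOfFin hA i = a := by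
  refine ⟨(A.orderIsoOfFin hA).symm ⟨a, ha⟩, ?_⟩
  rw [← Finset.coe_orderIsoOfFin_apply]
  simp

lemma sum_eq_sum_orderEmbOfFin {A : Finset α} {m : ℕ} (hA : A.card = m) (f : α → ℝ) :
    ∑ a ∈ A, f a = ∑ i : Fin m, f (A.orderEmbOfFin hA i) := by
  have himg : (Finset.univ : Finset (Fin m)).image (A.orderEmbOfFin hA) = A := by
    apply Finset.eq_of_subset_of_card_le
    · intro x hx
      simp only [Finset.mem_image] at hx
      obtain ⟨i, -, rfl⟩ := hx
      exact Finset.orderEmbOfFin_mem A hA i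
    · rw [Finset.card_image_of_injective _ (A.orderEmbOfFin hA).injective]
      simp [hA]
  calc ∑ a ∈ A, f a
      = ∑ a ∈ (Finset.univ : Finset (Fin m)).image (A.orderEmbOfFin hA), f a :=
        (Finset.sum_congr himg fun _ _ => rfl).symm
    _ = ∑ i : Fin m, f (A.orderEmbOfFin hA i) :=
        Finset.sum_image (by intro x _ y _ hxy; exact (A.orderEmbOfFin hA).injective hxy)

lemma card_filter_lt_orderEmbOfFin (A : Finset α) {m : ℕ} (hA : A.card = m) (i : Fin m) :
    (A.filter fun x => x < A.orderEmbOfFin hA i).card = (i : ℕ) := by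
  have h1 : A.filter (fun x => x < A.orderEmbOfFin hA i)
      = (Finset.univ.filter fun j : Fin m => j < i).image (A.orderEmbOfFin hA) := by
    ext x
    simp only [Finset.mem_filter, Finset.mem_image, Finset.mem_univ, true_and]
    constructor
    · rintro ⟨hx, hlt⟩
      obtain ⟨j, rfl⟩ := exists_orderEmbOfFin_eq hA hx
      exact ⟨j, (A.orderEmbOfFin hA).lt_iff_lt.1 hlt, rfl⟩
    · rintro ⟨j, hj, rfl⟩
      exact ⟨Finset.orderEmbOfFin_mem A hA j, (A.orderEmbOfFin hA).lt_iff_lt.2 hj⟩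
  rw [h1, Finset.card_image_of_injective _ (A.orderEmbOfFin hA).injective]
  have h2 : Finset.univ.filter (fun j : Fin m => j < i) = Finset.Iio i := by ext j; simp
  rw [h2, Fin.card_Iio]

lemma orderEmbOfFin_erase (A : Finset α) {m : ℕ} (hA : A.card = m + 1) (i : Fin (m + 1))
    (h' : (A.erase (A.orderEmbOfFin hA i)).card = m) :
    ⇑((A.erase (A.orderEmbOfFin hA i)).orderEmbOfFin h')
      = (A.orderEmbOfFin hA) ∘ i.succAbove := by
  symm
  apply Finset.orderEmbOfFin_unique h'
  · intro x
    simp only [Function.comp_apply, Finset.mem_erase]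
    exact ⟨fun he => (Fin.succAbove_ne i x) ((A.orderEmbOfFin hA).injective he),
      Finset.orderEmbOfFin_mem A hA _⟩
  · exact (A.orderEmbOfFin hA).strictMono.comp (Fin.strictMono_succAbove i)

lemma mdet_succ (h : α → α → ℝ) {A B : Finset α} {m : ℕ} (hA : A.card = m + 1)
    (hB : B.card = m + 1) {a : α} (ha : a ∈ A) :
    mdet h A B = ∑ b ∈ B,
      (-1 : ℝ) ^ ((A.filter fun x => x < a).card + (B.filter fun x => x < b).card)
        * h a b * mdet h (A.erase a) (B.erase b) := by
  obtain ⟨i, rfl⟩ := exists_orderEmbOfFin_eq hA ha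
  rw [mdet_eq hA hB, Matrix.det_succ_row _ i,
    sum_eq_sum_orderEmbOfFin hB]
  refine Finset.sum_congr rfl fun j _ => ?_
  have hcA : (A.erase (A.orderEmbOfFin hA i)).card = m := by
    rw [Finset.card_erase_of_mem (Finset.orderEmbOfFin_mem A hA i), hA]
    omega
  have hcB : (B.erase (B.orderEmbOfFin hB j)).card = m := by
    rw [Finset.card_erase_of_mem (Finset.orderEmbOfFin_mem B hB j), hB]
    omega
  rw [card_filter_lt_orderEmbOfFin A hA i, card_filter_lt_orderEmbOfFin B hB j]
  rw [mdet_eq hcA hcB, orderEmbOfFin_erase A hA i hcA, orderEmbOfFin_erase B hB j hcB]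
  rfl

open Polynomial

lemma mdet_eq_det_submatrix {m : ℕ} (M : Matrix (Fin m) (Fin m) ℝ) (T : Finset (Fin m)) :
    mdet (fun i j => M i j) T T
      = Matrix.det (M.submatrix ((↑) : {x // x ∈ T} → Fin m) ((↑) : {x // x ∈ T} → Fin m)) := by
  rw [mdet_eq (m := T.card) rfl rfl]
  rw [← Matrix.det_submatrix_equiv_self (T.orderIsoOfFin rfl).toEquiv
    (M.submatrix ((↑) : {x // x ∈ T} → Fin m) ((↑) : {x // x ∈ T} → Fin m))]
  congr 1

lemma det_compl_subtype {m : ℕ} (M : Matrix (Fin m) (Fin m) ℝ) (S : Finset (Fin m)) :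
    Matrix.det (M.submatrix ((↑) : {x // ¬ x ∈ S} → Fin m) ((↑) : {x // ¬ x ∈ S} → Fin m))
      = mdet (fun i j => M i j) Sᶜ Sᶜ := by
  rw [mdet_eq_det_submatrix]
  rw [← Matrix.det_submatrix_equiv_self
    (Equiv.subtypeEquivRight (fun x : Fin m => (Finset.mem_compl (s := S) (a := x))))
    (M.submatrix ((↑) : {x // ¬ x ∈ S} → Fin m) ((↑) : {x // ¬ x ∈ S} → Fin m))]
  congr 1

lemma det_piecewise {m : ℕ} (M : Matrix (Fin m) (Fin m) ℝ) (S : Finset (Fin m)) :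
    Matrix.det (Matrix.of fun i =>
        S.piecewise (fun i : Fin m => Pi.single i (X : ℝ[X])) (fun i : Fin m => -((M.map C) i)) i)
      = X ^ S.card * ((-1 : ℝ[X]) ^ (m - S.card) * C (mdet (fun i j => M i j) Sᶜ Sᶜ)) := by
  classical
  set N : Matrix (Fin m) (Fin m) ℝ[X] := Matrix.of fun i =>
    S.piecewise (fun i : Fin m => Pi.single i (X : ℝ[X])) (fun i : Fin m => -((M.map C) i)) i with hN
  rw [← Matrix.det_submatrix_equiv_self (Equiv.sumCompl (· ∈ S)) N]
  have hblocks : N.submatrix (Equiv.sumCompl (· ∈ S)) (Equiv.sumCompl (· ∈ S))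
      = Matrix.fromBlocks ((X : ℝ[X]) • (1 : Matrix {x // x ∈ S} {x // x ∈ S} ℝ[X])) 0
        (Matrix.of fun (i : {x // ¬ x ∈ S}) (j : {x // x ∈ S}) => -((M.map C) i j))
        (Matrix.of fun (i : {x // ¬ x ∈ S}) (j : {x // ¬ x ∈ S}) => -((M.map C) i j)) := by
    ext i j
    rcases i with i | i <;> rcases j with j | j <;>
      simp only [Matrix.submatrix_apply, Equiv.sumCompl_apply_inl, Equiv.sumCompl_apply_inr,
        Matrix.fromBlocks_apply₁₁, Matrix.fromBlocks_apply₁₂, Matrix.fromBlocks_apply₂₁,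
        Matrix.fromBlocks_apply₂₂, hN, Matrix.of_apply, Matrix.smul_apply, Matrix.one_apply,
        Matrix.zero_apply, smul_eq_mul]
    · rw [Finset.piecewise_eq_of_mem _ _ _ i.2, Pi.single_apply]
      by_cases hij : i = j
      · subst hij; simp
      · rw [if_neg (fun hc => hij (Subtype.ext hc.symm)), if_neg (fun hc => hij (Subtype.ext ?_)), mul_zero]
        exact congrArg Subtype.val hc
    · rw [Finset.piecewise_eq_of_mem _ _ _ i.2, Pi.single_apply, if_neg]
      intro hc
      exact j.2 (hc ▸ i.2)
    · rw [Finset.piecewise_eq_of_notMem _ _ _ i.2]; rfl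
    · rw [Finset.piecewise_eq_of_notMem _ _ _ i.2]; rfl
  rw [hblocks, Matrix.det_fromBlocks_zero₁₂]
  congr 1
  · rw [Matrix.det_smul, Matrix.det_one, mul_one, Fintype.card_coe]
  · have h1 : (Matrix.of fun (i : {x // ¬ x ∈ S}) (j : {x // ¬ x ∈ S}) => -((M.map C) i j))
        = -((M.submatrix ((↑) : {x // ¬ x ∈ S} → Fin m) ((↑) : {x // ¬ x ∈ S} → Fin m)).map C) := by
      ext i j; rfl
    rw [h1, Matrix.det_neg, ← RingHom.mapMatrix_apply, ← RingHom.map_det, det_compl_subtype,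
      Fintype.card_subtype_compl, Fintype.card_coe, Fintype.card_fin]

lemma charpoly_eq_sum_minors {m : ℕ} (M : Matrix (Fin m) (Fin m) ℝ) :
    M.charpoly = ∑ S : Finset (Fin m),
      X ^ S.card * ((-1 : ℝ[X]) ^ (m - S.card) * C (mdet (fun i j => M i j) Sᶜ Sᶜ)) := by
  classical
  have hrows : Matrix.charmatrix M
      = ((fun i : Fin m => Pi.single i (X : ℝ[X]))
          + (fun i : Fin m => -((M.map C) i)) : Fin m → Fin m → ℝ[X]) := by
    funext i j
    simp only [Pi.add_apply]
    rw [Matrix.charmatrix_apply, sub_eq_add_neg]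
    congr 1
    · rw [Matrix.diagonal_apply, Pi.single_apply]
      by_cases hij : i = j
      · subst hij; simp
      · rw [if_neg hij, if_neg (Ne.symm hij)]
  have h2 := (Matrix.detRowAlternating (R := ℝ[X]) (n := Fin m)).toMultilinearMap.map_add_univ
    (fun i : Fin m => Pi.single i (X : ℝ[X])) (fun i : Fin m => -((M.map C) i))
  calc M.charpoly
      = Matrix.detRowAlternating (((fun i : Fin m => Pi.single i (X : ℝ[X]))
          + fun i : Fin m => -((M.map C) i) : Fin m → Fin m → ℝ[X])) := by
        show (Matrix.charmatrix M).det = _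
        rw [hrows]; rfl
    _ = ∑ S : Finset (Fin m), Matrix.detRowAlternating
          (S.piecewise (fun i : Fin m => Pi.single i (X : ℝ[X])) (fun i : Fin m => -((M.map C) i))) := h2
    _ = _ := Finset.sum_congr rfl fun S _ => det_piecewise M S

lemma sMat_sum_minors {m r : ℕ} (hr : r ≤ m) (M : Matrix (Fin m) (Fin m) ℝ) :
    (-1 : ℝ) ^ r * (Matrix.charpoly M).coeff (m - r)
      = ∑ T ∈ Finset.powersetCard r (Finset.univ : Finset (Fin m)),
        mdet (fun i j => M i j) T T := by
  classical
  rw [charpoly_eq_sum_minors, Polynomial.finset_sum_coeff]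
  have hterm : ∀ S : Finset (Fin m),
      (X ^ S.card * ((-1 : ℝ[X]) ^ (m - S.card) * C (mdet (fun i j => M i j) Sᶜ Sᶜ))).coeff (m - r)
        = if S.card = m - r then (-1 : ℝ) ^ (m - S.card) * mdet (fun i j => M i j) Sᶜ Sᶜ else 0 := by
    intro S
    have : (-1 : ℝ[X]) ^ (m - S.card) * C (mdet (fun i j => M i j) Sᶜ Sᶜ)
        = C ((-1 : ℝ) ^ (m - S.card) * mdet (fun i j => M i j) Sᶜ Sᶜ) := by
      rw [map_mul, map_pow, map_neg, map_one]
    rw [this, mul_comm, Polynomial.coeff_C_mul, Polynomial.coeff_X_pow]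
    by_cases hc : S.card = m - r
    · rw [if_pos hc.symm, if_pos hc, mul_one]
    · rw [if_neg (fun hh => hc hh.symm), if_neg hc, mul_zero]
  rw [Finset.sum_congr rfl (fun S _ => hterm S)]
  rw [← Finset.sum_filter]
  have hfil : (Finset.univ : Finset (Finset (Fin m))).filter (fun S => S.card = m - r)
      = Finset.powersetCard (m - r) Finset.univ := by
    ext S; simp [Finset.mem_powersetCard_univ]
  rw [hfil, Finset.mul_sum]
  refine Finset.sum_nbij' (fun S => Sᶜ) (fun T => Tᶜ) ?_ ?_ ?_ ?_ ?_
  · intro S hS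
    rw [Finset.mem_powersetCard_univ] at hS ⊢
    rw [Finset.card_compl, Fintype.card_fin, hS]
    omega
  · intro T hT
    rw [Finset.mem_powersetCard_univ] at hT ⊢
    rw [Finset.card_compl, Fintype.card_fin, hT]
  · intro S _; exact compl_compl S
  · intro T _; exact compl_compl T
  · intro S hS
    rw [Finset.mem_powersetCard_univ] at hS
    have hm : m - S.card = r := by omega
    rw [hm, ← mul_assoc, ← pow_add, ← two_mul, pow_mul]
    norm_num

lemma dpow_ofMatrix (h : Matrix (Fin n) (Fin n) ℝ) (r : ℕ) (A B : Finset (Fin n)) :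
    dpow (ofMatrix h) r A B =
      if A.card = r ∧ B.card = r then (r.factorial : ℝ) * mdet (fun i j => h i j) A B else 0 := by
  induction r generalizing A B with
  | zero =>
    rw [dpow]
    show (if A = ∅ ∧ B = ∅ then (1 : ℝ) else 0) = _
    by_cases h1 : A = ∅ ∧ B = ∅
    · obtain ⟨rfl, rfl⟩ := h1
      simp [mdet_empty]
    · rw [if_neg h1, if_neg]
      rintro ⟨ha, hb⟩
      exact h1 ⟨Finset.card_eq_zero.1 ha, Finset.card_eq_zero.1 hb⟩
  | succ r ih =>
    rw [dpow, wedge_ofMatrix]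
    by_cases hc : A.card = r + 1 ∧ B.card = r + 1
    · obtain ⟨hcA, hcB⟩ := hc
      rw [if_pos ⟨hcA, hcB⟩]
      have step : ∀ a ∈ A, ∑ b ∈ B, shuffleSign {a} (A \ {a}) * shuffleSign {b} (B \ {b})
            * h a b * dpow (ofMatrix h) r (A \ {a}) (B \ {b})
          = (r.factorial : ℝ) * mdet (fun i j => h i j) A B := by
        intro a ha
        rw [mdet_succ (fun i j => h i j) hcA hcB ha, Finset.mul_sum]
        refine Finset.sum_congr rfl fun b hb => ?_
        simp only [← Finset.erase_eq]
        rw [ih, if_pos ⟨by rw [Finset.card_erase_of_mem ha, hcA]; omega,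
          by rw [Finset.card_erase_of_mem hb, hcB]; omega⟩]
        rw [shuffleSign_singleton, shuffleSign_singleton]
        rw [Finset.filter_erase, Finset.erase_eq_of_notMem (by simp), Finset.filter_erase,
          Finset.erase_eq_of_notMem (by simp), pow_add]
        ring_nf
      rw [Finset.sum_congr rfl step, Finset.sum_const, hcA, nsmul_eq_mul, Nat.factorial_succ]
      push_cast
      ring
    · rw [if_neg hc]
      apply Finset.sum_eq_zero; intro a ha
      apply Finset.sum_eq_zero; intro b hb
      rw [ih, if_neg, mul_zero]
      rintro ⟨ha', hb'⟩
      simp only [← Finset.erase_eq] at ha' hb'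
      rw [Finset.card_erase_of_mem ha] at ha'
      rw [Finset.card_erase_of_mem hb] at hb'
      have h1 := Finset.card_pos.2 ⟨a, ha⟩
      have h2 := Finset.card_pos.2 ⟨b, hb⟩
      apply hc
      omega

lemma mdet_image {m : ℕ} (I : Finset (Fin n)) (hI : I.card = m)
    (h : Matrix (Fin n) (Fin n) ℝ) (T : Finset (Fin m)) :
    mdet (fun i j => h i j) (T.image (I.orderEmbOfFin hI)) (T.image (I.orderEmbOfFin hI))
      = mdet (fun a b => h (I.orderEmbOfFin hI a) (I.orderEmbOfFin hI b)) T T := by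
  have hinj : Function.Injective (I.orderEmbOfFin hI) := (I.orderEmbOfFin hI).injective
  have hS : (T.image (I.orderEmbOfFin hI)).card = T.card :=
    Finset.card_image_of_injective _ hinj
  rw [mdet_eq (m := T.card) hS hS, mdet_eq (m := T.card) rfl rfl]
  have hemb : ⇑((T.image (I.orderEmbOfFin hI)).orderEmbOfFin hS)
      = (I.orderEmbOfFin hI) ∘ (T.orderEmbOfFin rfl) := by
    symm
    apply Finset.orderEmbOfFin_unique hS
    · intro x
      exact Finset.mem_image_of_mem _ (Finset.orderEmbOfFin_mem T rfl x)
    · exact (I.orderEmbOfFin hI).strictMono.comp (T.orderEmbOfFin rfl).strictMono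
  rw [hemb]
  rfl

lemma sum_mdet_image {m : ℕ} (I : Finset (Fin n)) (hI : I.card = m)
    (h : Matrix (Fin n) (Fin n) ℝ) (r : ℕ) :
    ∑ S ∈ I.powersetCard r, mdet (fun i j => h i j) S S
      = ∑ T ∈ Finset.powersetCard r (Finset.univ : Finset (Fin m)),
          mdet (fun a b => h (I.orderEmbOfFin hI a) (I.orderEmbOfFin hI b)) T T := by
  have hinj : Function.Injective (I.orderEmbOfFin hI) := (I.orderEmbOfFin hI).injective
  refine Finset.sum_nbij' (fun S => Finset.univ.filter (fun t : Fin m => I.orderEmbOfFin hI t ∈ S))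
    (fun T => T.image (I.orderEmbOfFin hI)) ?_ ?_ ?_ ?_ ?_
  · intro S hS
    rw [Finset.mem_powersetCard] at hS
    rw [Finset.mem_powersetCard_univ]
    have himg : (Finset.univ.filter (fun t : Fin m => I.orderEmbOfFin hI t ∈ S)).image
        (I.orderEmbOfFin hI) = S := by
      ext x
      simp only [Finset.mem_image, Finset.mem_filter, Finset.mem_univ, true_and]
      constructor
      · rintro ⟨t, ht, rfl⟩; exact ht
      · intro hx
        obtain ⟨t, rfl⟩ := exists_orderEmbOfFin_eq hI (hS.1 hx)
        exact ⟨t, hx, rfl⟩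
    calc #(Finset.univ.filter (fun t : Fin m => I.orderEmbOfFin hI t ∈ S))
        = #((Finset.univ.filter (fun t : Fin m => I.orderEmbOfFin hI t ∈ S)).image
            (I.orderEmbOfFin hI)) := (Finset.card_image_of_injective _ hinj).symm
      _ = r := by rw [himg, hS.2]
  · intro T hT
    rw [Finset.mem_powersetCard_univ] at hT
    rw [Finset.mem_powersetCard]
    constructor
    · intro x hx
      simp only [Finset.mem_image] at hx
      obtain ⟨t, -, rfl⟩ := hx
      exact Finset.orderEmbOfFin_mem I hI t
    · rw [Finset.card_image_of_injective _ hinj, hT]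
  · intro S hS
    rw [Finset.mem_powersetCard] at hS
    ext x
    simp only [Finset.mem_image, Finset.mem_filter, Finset.mem_univ, true_and]
    constructor
    · rintro ⟨t, ht, rfl⟩; exact ht
    · intro hx
      obtain ⟨t, rfl⟩ := exists_orderEmbOfFin_eq hI (hS.1 hx)
      exact ⟨t, hx, rfl⟩
  · intro T hT
    ext t
    simp only [Finset.mem_filter, Finset.mem_univ, true_and, Finset.mem_image]
    constructor
    · rintro ⟨u, hu, hut⟩; rwa [← hinj hut]
    · intro ht; exact ⟨t, ht, rfl⟩
  · intro S hS
    rw [Finset.mem_powersetCard] at hS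
    have himg : (Finset.univ.filter (fun t : Fin m => I.orderEmbOfFin hI t ∈ S)).image
        (I.orderEmbOfFin hI) = S := by
      ext x
      simp only [Finset.mem_image, Finset.mem_filter, Finset.mem_univ, true_and]
      constructor
      · rintro ⟨t, ht, rfl⟩; exact ht
      · intro hx
        obtain ⟨t, rfl⟩ := exists_orderEmbOfFin_eq hI (hS.1 hx)
        exact ⟨t, hx, rfl⟩
    conv_lhs => rw [← himg]
    rw [mdet_image]


end DForm
/-- The characteristic coefficient `s_r` of a square matrix. -/
noncomputable def sMat {m : ℕ} (M : Matrix (Fin m) (Fin m) ℝ) (r : ℕ) : ℝ :=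
  (-1 : ℝ) ^ r * (Matrix.charpoly M).coeff (m - r)

open DForm in
/-- `g^k h^r (e_{i₁}∧…∧e_{i_{k+r}}, e_{i₁}∧…∧e_{i_{k+r}}) = k! r! s_r` of the corresponding
principal submatrix of `h`. -/
theorem statement2 (n k r : ℕ) (h : Matrix (Fin n) (Fin n) ℝ) (hkr : k + r ≤ n)
    (I : Finset (Fin n)) (hI : I.card = k + r) :
    wedge (dpow (gMetric n) k) (dpow (ofMatrix h) r) I I =
      (k.factorial : ℝ) * (r.factorial : ℝ) *
        sMat (Matrix.of fun a b : Fin (k + r) =>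
          h (I.orderIsoOfFin hI a) (I.orderIsoOfFin hI b)) r := by
  classical
  have key : wedge (dpow (gMetric n) k) (dpow (ofMatrix h) r) I I =
      (k.factorial : ℝ) * (r.factorial : ℝ) *
        ∑ S ∈ I.powersetCard r, mdet (fun i j => h i j) S S := by
    rw [wedge]
    have step1 : ∀ A ∈ I.powerset,
        (∑ B ∈ I.powerset, shuffleSign A (I \ A) * shuffleSign B (I \ B) *
          dpow (gMetric n) k A B * dpow (ofMatrix h) r (I \ A) (I \ B))
        = (if A.card = k then
            (k.factorial : ℝ) * ((r.factorial : ℝ) * mdet (fun i j => h i j) (I \ A) (I \ A))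
          else 0) := by
      intro A hA
      rw [Finset.mem_powerset] at hA
      rw [Finset.sum_eq_single_of_mem A (Finset.mem_powerset.2 hA)]
      · rw [dpow_gMetric]
        by_cases hAk : A.card = k
        · have hcard : (I \ A).card = r := by
            rw [Finset.card_sdiff_of_subset hA, hI, hAk]; omega
          rw [if_pos ⟨rfl, hAk⟩, if_pos hAk, dpow_ofMatrix, if_pos ⟨hcard, hcard⟩,
            shuffleSign_mul_self, one_mul]
        · rw [if_neg (fun hc => hAk hc.2), if_neg hAk, mul_zero, zero_mul]
      · intro B hB hBA
        rw [dpow_gMetric, if_neg, mul_zero, zero_mul]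
        rintro ⟨h1, -⟩
        exact hBA h1.symm
    rw [Finset.sum_congr rfl step1, ← Finset.sum_filter, ← Finset.powersetCard_eq_filter,
      Finset.mul_sum]
    refine Finset.sum_nbij' (fun A => I \ A) (fun S => I \ S) ?_ ?_ ?_ ?_ ?_
    · intro A hA
      rw [Finset.mem_powersetCard] at hA ⊢
      refine ⟨Finset.sdiff_subset, ?_⟩
      rw [Finset.card_sdiff_of_subset hA.1, hI, hA.2]; omega
    · intro S hS
      rw [Finset.mem_powersetCard] at hS ⊢
      refine ⟨Finset.sdiff_subset, ?_⟩
      rw [Finset.card_sdiff_of_subset hS.1, hI, hS.2]; omega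
    · intro A hA
      rw [Finset.mem_powersetCard] at hA
      exact Finset.sdiff_sdiff_eq_self hA.1
    · intro S hS
      rw [Finset.mem_powersetCard] at hS
      exact Finset.sdiff_sdiff_eq_self hS.1
    · intro A hA
      rw [← mul_assoc]
  rw [key, sMat, sMat_sum_minors (Nat.le_add_left r k), sum_mdet_image I hI h r]
  congr 1
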